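/- Let V₀ be an abelian group and V = {f : ℤ → V₀ with finite support}. Define α : V → V by (α f)(n) = f(n-1), e_i : V → V by e_i(f)(j) = f(i) if j = i and 0 otherwise, q_i = Σ_{j ≤ i} e_j, E : V → V₀ by E(f) = Σ_i f(i), and φ : V₀ → V by φ(x)(0) = x, φ(x)(j) = 0 for j ≠ 0. Then for every f ∈ V, f - φ(E(f)) = (1 - α⁻¹)( -Σ_{j<0} α^{-j} q_j(f) + Σ_{j≥0} α^{-j}(1 - q_j)(f) ), where all sums are finite when applied to a fixed f. -/

import Mathlib

open Finsupp

/-- The shift automorphism `(α f)(n) = f (n-1)` on finitely supported functions `ℤ →₀ M`. -/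
noncomputable def sh (M : Type*) [AddCommGroup M] : AddAut (ℤ →₀ M) :=
  (Finsupp.domCongr (Equiv.addRight (1:ℤ)) : (ℤ →₀ M) ≃+ (ℤ →₀ M))

/-- The sum-of-coordinates map `E : (ℤ →₀ M) → M`. -/
noncomputable def Esum (M : Type*) [AddCommGroup M] : (ℤ →₀ M) →+ M :=
  Finsupp.liftAddHom fun _ => AddMonoidHom.id M

/-- The inclusion `φ : M → (ℤ →₀ M)` at coordinate `0`. -/
noncomputable def phi (M : Type*) [AddCommGroup M] : M →+ (ℤ →₀ M) :=
  Finsupp.singleAddHom (0:ℤ)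

/-- The projection `e_i` onto coordinate `i`. -/
noncomputable def eproj (M : Type*) [AddCommGroup M] (i : ℤ) : (ℤ →₀ M) →+ (ℤ →₀ M) :=
  (Finsupp.singleAddHom i).comp (Finsupp.applyAddHom i)

/-- `q_i = ∑_{j ≤ i} e_j` : restriction to coordinates `≤ i`. -/
noncomputable def qproj (M : Type*) [AddCommGroup M] (i : ℤ) : (ℤ →₀ M) →+ (ℤ →₀ M) :=
  Finsupp.filterAddHom (fun j => j ≤ i)

section
variable {V₀ : Type*} [AddCommGroup V₀] (W₀ : AddSubgroup V₀) (β₀ : W₀ →+ V₀)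

/-- The inclusion of `W = ℤ →₀ W₀` into `V = ℤ →₀ V₀`. -/
noncomputable def iota : (ℤ →₀ W₀) →+ (ℤ →₀ V₀) :=
  Finsupp.mapRange.addMonoidHom W₀.subtype

/-- `β : W → V`, applying `β₀` coordinatewise. -/
noncomputable def betaMap : (ℤ →₀ W₀) →+ (ℤ →₀ V₀) :=
  Finsupp.mapRange.addMonoidHom β₀

/-- `(1 - αβ) : W → V`. -/
noncomputable def oneSubAlphaBeta : (ℤ →₀ W₀) →+ (ℤ →₀ V₀) :=
  iota W₀ - ((sh V₀).toAddMonoidHom.comp (betaMap W₀ β₀))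

/-- `I = (1 - αβ)(W) ⊆ V`. -/
noncomputable def Isub : AddSubgroup (ℤ →₀ V₀) :=
  (oneSubAlphaBeta W₀ β₀).range

end

section TelescopeAux
open Finsupp

variable {M : Type*} [AddCommGroup M]

lemma qproj_def' (j : ℤ) (f : ℤ →₀ M) : qproj M j f = f.filter (fun i => i ≤ j) := rfl

lemma qproj_single_of_le {i j : ℤ} (h : i ≤ j) (x : M) :
    qproj M j (single i x) = single i x := by
  rw [qproj_def']; exact Finsupp.filter_single_of_pos _ h

lemma qproj_single_of_gt {i j : ℤ} (h : j < i) (x : M) :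
    qproj M j (single i x) = 0 := by
  rw [qproj_def']; exact Finsupp.filter_single_of_neg _ (by omega)

lemma sh_single (m : ℤ) (x : M) : sh M (single m x) = single (m+1) x := by
  simp [sh, Finsupp.domCongr_apply]

lemma sh_inv_single (m : ℤ) (x : M) : (-(sh M)) (single m x) = single (m-1) x := by
  have : sh M (single (m-1) x) = single m x := by rw [sh_single]; ring_nf
  rw [← this]; simp

lemma sh_zpow_single (n m : ℤ) (x : M) : (n • sh M) (single m x) = single (m+n) x := by
  induction n using Int.induction_on generalizing m with
  | zero => simp
  | succ k ih => rw [add_one_zsmul, AddAut.add_apply, sh_single, ih]; ring_nf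
  | pred k ih => rw [sub_one_zsmul, AddAut.add_apply, sh_inv_single, ih]; ring_nf

lemma Afin (f : ℤ →₀ M) :
    ({j : ℤ | j < 0} ∩ Function.support fun j => ((-j) • sh M) (qproj M j f)).Finite := by
  apply Set.Finite.subset (Finset.finite_toSet (f.support.biUnion fun i => Finset.Icc i (-1)))
  rintro j ⟨hj, hsupp⟩
  simp only [Set.mem_setOf_eq] at hj
  have hq : qproj M j f ≠ 0 := by
    intro h
    apply hsupp
    simp [h]
  obtain ⟨i, hi⟩ := Finsupp.ne_iff.mp hq
  rw [qproj_def', Finsupp.filter_apply] at hi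
  simp only [Finsupp.coe_zero, Pi.zero_apply] at hi
  by_cases hij : i ≤ j
  · simp only [hij, if_true] at hi
    simp only [Finset.coe_biUnion, Set.mem_iUnion, Finset.mem_coe]
    exact ⟨i, Finsupp.mem_support_iff.mpr hi, Finset.mem_Icc.mpr ⟨hij, by omega⟩⟩
  · simp [hij] at hi

lemma Bfin (f : ℤ →₀ M) :
    ({j : ℤ | 0 ≤ j} ∩ Function.support fun j => ((-j) • sh M) (f - qproj M j f)).Finite := by
  apply Set.Finite.subset
    (Finset.finite_toSet (f.support.biUnion fun i => Finset.Icc 0 (i-1)))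
  rintro j ⟨hj, hsupp⟩
  simp only [Set.mem_setOf_eq] at hj
  have hq : f - qproj M j f ≠ 0 := by
    intro h
    apply hsupp
    simp [h]
  obtain ⟨i, hi⟩ := Finsupp.ne_iff.mp hq
  rw [Finsupp.sub_apply, qproj_def', Finsupp.filter_apply] at hi
  simp only [Finsupp.coe_zero, Pi.zero_apply] at hi
  by_cases hij : i ≤ j
  · simp [hij] at hi
  · simp only [hij, if_false, sub_zero] at hi
    simp only [Finset.coe_biUnion, Set.mem_iUnion, Finset.mem_coe]
    exact ⟨i, Finsupp.mem_support_iff.mpr hi, Finset.mem_Icc.mpr ⟨hj, by omega⟩⟩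

lemma A_add (f g : ℤ →₀ M) :
    ∑ᶠ j ∈ {j : ℤ | j < 0}, ((-j) • sh M) (qproj M j (f + g)) =
      (∑ᶠ j ∈ {j : ℤ | j < 0}, ((-j) • sh M) (qproj M j f)) +
        ∑ᶠ j ∈ {j : ℤ | j < 0}, ((-j) • sh M) (qproj M j g) := by
  rw [← finsum_mem_add_distrib' (Afin f) (Afin g)]
  apply finsum_mem_congr rfl
  intro j _
  rw [map_add, map_add]

lemma B_add (f g : ℤ →₀ M) :
    ∑ᶠ j ∈ {j : ℤ | 0 ≤ j}, ((-j) • sh M) ((f + g) - qproj M j (f + g)) =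
      (∑ᶠ j ∈ {j : ℤ | 0 ≤ j}, ((-j) • sh M) (f - qproj M j f)) +
        ∑ᶠ j ∈ {j : ℤ | 0 ≤ j}, ((-j) • sh M) (g - qproj M j g) := by
  rw [← finsum_mem_add_distrib' (Bfin f) (Bfin g)]
  apply finsum_mem_congr rfl
  intro j _
  rw [← map_add]
  congr 1
  rw [map_add]
  abel

lemma A_single_neg {i : ℤ} (hi : i < 0) (x : M) :
    ∑ᶠ j ∈ {j : ℤ | j < 0}, ((-j) • sh M) (qproj M j (single i x)) =
      ∑ k ∈ Finset.range (-i).toNat, single (-(k:ℤ)) x := by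
  have h1 : ∑ᶠ j ∈ {j : ℤ | j < 0}, ((-j) • sh M) (qproj M j (single i x)) =
      ∑ j ∈ (Finset.range (-i).toNat).image (fun k : ℕ => i + (k:ℤ)),
        ((-j) • sh M) (qproj M j (single i x)) := by
    apply finsum_mem_eq_sum_of_subset
    · rintro j ⟨hj, hsupp⟩
      simp only [Set.mem_setOf_eq] at hj
      have hij : i ≤ j := by
        by_contra h
        apply hsupp
        show ((-j) • sh M) (qproj M j (single i x)) = 0
        rw [qproj_single_of_gt (by omega), map_zero]
      simp only [Finset.coe_image, Set.mem_image, Finset.mem_coe, Finset.mem_range]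
      exact ⟨(j - i).toNat, by omega, by omega⟩
    · intro j hj
      simp only [Finset.coe_image, Set.mem_image, Finset.mem_coe, Finset.mem_range] at hj
      obtain ⟨k, hk, rfl⟩ := hj
      simp only [Set.mem_setOf_eq]
      omega
  rw [h1, Finset.sum_image (by intro a _ b _ h; simp only at h; omega)]
  apply Finset.sum_congr rfl
  intro k _
  rw [qproj_single_of_le (by omega), sh_zpow_single]
  congr 1
  ring

lemma A_single_nonneg {i : ℤ} (hi : 0 ≤ i) (x : M) :
    ∑ᶠ j ∈ {j : ℤ | j < 0}, ((-j) • sh M) (qproj M j (single i x)) = 0 := by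
  apply finsum_mem_of_eqOn_zero
  intro j hj
  simp only [Set.mem_setOf_eq] at hj
  show ((-j) • sh M) (qproj M j (single i x)) = (0:ℤ → (ℤ →₀ M)) j
  show ((-j) • sh M) (qproj M j (single i x)) = 0
  rw [qproj_single_of_gt (by omega), map_zero]

lemma B_single_pos {i : ℤ} (hi : 0 < i) (x : M) :
    ∑ᶠ j ∈ {j : ℤ | 0 ≤ j}, ((-j) • sh M) (single i x - qproj M j (single i x)) =
      ∑ k ∈ Finset.range i.toNat, single (i - (k:ℤ)) x := by
  have h1 : ∑ᶠ j ∈ {j : ℤ | 0 ≤ j}, ((-j) • sh M) (single i x - qproj M j (single i x)) =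
      ∑ j ∈ (Finset.range i.toNat).image (fun k : ℕ => (k:ℤ)),
        ((-j) • sh M) (single i x - qproj M j (single i x)) := by
    apply finsum_mem_eq_sum_of_subset
    · rintro j ⟨hj, hsupp⟩
      simp only [Set.mem_setOf_eq] at hj
      have hij : j < i := by
        by_contra h
        apply hsupp
        show ((-j) • sh M) (single i x - qproj M j (single i x)) = 0
        rw [qproj_single_of_le (by omega), sub_self, map_zero]
      simp only [Finset.coe_image, Set.mem_image, Finset.mem_coe, Finset.mem_range]
      exact ⟨j.toNat, by omega, by omega⟩
    · intro j hj
      simp only [Finset.coe_image, Set.mem_image, Finset.mem_coe, Finset.mem_range] at hj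
      obtain ⟨k, hk, rfl⟩ := hj
      simp only [Set.mem_setOf_eq]
      omega
  rw [h1, Finset.sum_image (by intro a _ b _ h; simp only at h; omega)]
  apply Finset.sum_congr rfl
  intro k hk
  simp only [Finset.mem_range] at hk
  rw [qproj_single_of_gt (by omega), sub_zero, sh_zpow_single]
  congr 1

lemma B_single_nonpos {i : ℤ} (hi : i ≤ 0) (x : M) :
    ∑ᶠ j ∈ {j : ℤ | 0 ≤ j}, ((-j) • sh M) (single i x - qproj M j (single i x)) = 0 := by
  apply finsum_mem_of_eqOn_zero
  intro j hj
  simp only [Set.mem_setOf_eq] at hj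
  show ((-j) • sh M) (single i x - qproj M j (single i x)) = (0:ℤ → (ℤ →₀ M)) j
  show ((-j) • sh M) (single i x - qproj M j (single i x)) = 0
  rw [qproj_single_of_le (by omega), sub_self, map_zero]

lemma key_single (i : ℤ) (x : M) :
    single i x - phi M (Esum M (single i x)) =
      (fun g => g - (-(sh M)) g)
        ((-∑ᶠ j ∈ {j : ℤ | j < 0}, ((-j) • sh M) (qproj M j (single i x))) +
          ∑ᶠ j ∈ {j : ℤ | 0 ≤ j}, ((-j) • sh M) (single i x - qproj M j (single i x))) := by
  have hE : Esum M (single i x) = x := Finsupp.liftAddHom_apply_single _ _ _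
  rw [hE]
  show single i x - single 0 x = _
  rcases lt_trichotomy i 0 with hi | hi | hi
  · rw [A_single_neg hi, B_single_nonpos hi.le]
    show single i x - single 0 x =
      (-(∑ k ∈ Finset.range (-i).toNat, single (-(k:ℤ)) x) + 0) -
        (-(sh M)) (-(∑ k ∈ Finset.range (-i).toNat, single (-(k:ℤ)) x) + 0)
    rw [add_zero, map_neg, sub_neg_eq_add, neg_add_eq_sub, map_sum, ← Finset.sum_sub_distrib]
    calc single i x - single 0 x
        = single (-(((-i).toNat : ℕ):ℤ)) x - single (-((0:ℕ):ℤ)) x := by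
          congr 2
          omega
      _ = ∑ k ∈ Finset.range (-i).toNat,
            (single (-((k+1:ℕ):ℤ)) x - single (-(k:ℤ)) x) :=
          (Finset.sum_range_sub (fun k : ℕ => single (-(k:ℤ)) x) _).symm
      _ = ∑ k ∈ Finset.range (-i).toNat,
            ((-(sh M)) (single (-(k:ℤ)) x) - single (-(k:ℤ)) x) := by
          apply Finset.sum_congr rfl
          intro k _
          rw [sh_inv_single]
          congr 2
          push_cast; ring
  · subst hi
    rw [A_single_nonneg le_rfl, B_single_nonpos le_rfl]
    simp
  · rw [A_single_nonneg hi.le, B_single_pos hi]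
    show single i x - single 0 x =
      (-0 + ∑ k ∈ Finset.range i.toNat, single (i-(k:ℤ)) x) -
        (-(sh M)) (-0 + ∑ k ∈ Finset.range i.toNat, single (i-(k:ℤ)) x)
    rw [neg_zero, zero_add, map_sum, ← Finset.sum_sub_distrib]
    calc single i x - single 0 x
        = single (i-((0:ℕ):ℤ)) x - single (i-((i.toNat : ℕ):ℤ)) x := by
          congr 2 <;> omega
      _ = -∑ k ∈ Finset.range i.toNat,
            (single (i-((k+1:ℕ):ℤ)) x - single (i-(k:ℤ)) x) := by
          rw [Finset.sum_range_sub (fun k : ℕ => single (i-(k:ℤ)) x)]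
          abel
      _ = ∑ k ∈ Finset.range i.toNat,
            (single (i-(k:ℤ)) x - (-(sh M)) (single (i-(k:ℤ)) x)) := by
          rw [← Finset.sum_neg_distrib]
          apply Finset.sum_congr rfl
          intro k _
          rw [sh_inv_single]
          push_cast
          abel_nf

end TelescopeAux

/-- Telescoping identity: . -/
theorem stmt0 {V₀ : Type*} [AddCommGroup V₀] (f : ℤ →₀ V₀) :
    f - phi V₀ (Esum V₀ f) =
      (fun g => g - (-(sh V₀)) g)
        ((-∑ᶠ j ∈ {j : ℤ | j < 0}, ((-j) • sh V₀) (qproj V₀ j f)) +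
          ∑ᶠ j ∈ {j : ℤ | 0 ≤ j}, ((-j) • sh V₀) (f - qproj V₀ j f)) := by
  induction f using Finsupp.induction with
  | zero =>
    have hA : ∑ᶠ j ∈ {j : ℤ | j < 0}, ((-j) • sh V₀) (qproj V₀ j (0 : ℤ →₀ V₀)) = 0 := by
      apply finsum_mem_of_eqOn_zero
      intro j _
      show ((-j) • sh V₀) (qproj V₀ j (0 : ℤ →₀ V₀)) = (0 : ℤ → (ℤ →₀ V₀)) j
      show ((-j) • sh V₀) (qproj V₀ j (0 : ℤ →₀ V₀)) = 0
      rw [map_zero, map_zero]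
    have hB : ∑ᶠ j ∈ {j : ℤ | 0 ≤ j},
        ((-j) • sh V₀) ((0 : ℤ →₀ V₀) - qproj V₀ j (0 : ℤ →₀ V₀)) = 0 := by
      apply finsum_mem_of_eqOn_zero
      intro j _
      show ((-j) • sh V₀) ((0:ℤ →₀ V₀) - qproj V₀ j (0:ℤ →₀ V₀)) = (0 : ℤ → (ℤ →₀ V₀)) j
      show ((-j) • sh V₀) ((0:ℤ →₀ V₀) - qproj V₀ j (0:ℤ →₀ V₀)) = 0
      rw [map_zero, sub_zero, map_zero]
    rw [hA, hB]
    simp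
  | single_add i x f _ _ ih =>
    have hL : (single i x + f) - phi V₀ (Esum V₀ (single i x + f)) =
        (single i x - phi V₀ (Esum V₀ (single i x))) + (f - phi V₀ (Esum V₀ f)) := by
      rw [map_add, map_add]
      abel
    rw [hL, key_single, ih, A_add, B_add]
    show (_ - (-(sh V₀)) _) + (_ - (-(sh V₀)) _) = _ - (-(sh V₀)) _
    generalize (∑ᶠ j ∈ {j : ℤ | j < 0}, ((-j) • sh V₀) (qproj V₀ j (single i x))) = a
    generalize (∑ᶠ j ∈ {j : ℤ | 0 ≤ j},
      ((-j) • sh V₀) (single i x - qproj V₀ j (single i x))) = b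
    generalize (∑ᶠ j ∈ {j : ℤ | j < 0}, ((-j) • sh V₀) (qproj V₀ j f)) = c
    generalize (∑ᶠ j ∈ {j : ℤ | 0 ≤ j}, ((-j) • sh V₀) (f - qproj V₀ j f)) = d
    simp only [map_add, map_neg]
    abel
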